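/- Let L be a complex Banach Lie algebra such that the intersection of all maximal proper closed Lie subalgebras of finite codimension in L equals {0}. Then L is nilpotent if and only if L is abelian, i.e. ⁅L,L⁆ = {0}. -/

import Mathlib

private lemma aux_lie_mem {L : Type*} [LieRing L] [LieAlgebra ℂ L]
    (M : LieSubalgebra ℂ L) (hM : M ≠ ⊤) (hmax : ∀ N : LieSubalgebra ℂ L, M < N → N = ⊤)
    (n : ℕ) (h : ∀ z ∈ LieModule.lowerCentralSeries ℂ L L n, z ∈ M) :
    ∀ x y : L, ⁅x, y⁆ ∈ M := by
  induction n with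
  | zero =>
    exfalso
    apply hM
    ext z
    simp only [LieSubalgebra.mem_top, iff_true]
    exact h z (by simp)
  | succ n ih =>
    -- key: ⁅·, C^n⁆ ⊆ C^{n+1} ⊆ M
    have hstep : ∀ w : L, ∀ z ∈ LieModule.lowerCentralSeries ℂ L L n, ⁅w, z⁆ ∈ M := by
      intro w z hz
      apply h
      rw [LieModule.lowerCentralSeries_succ]
      exact LieSubmodule.lie_mem_lie (LieSubmodule.mem_top w) hz
    have hbr : ∀ a b c d : L, a ∈ M → c ∈ M →
        b ∈ LieModule.lowerCentralSeries ℂ L L n → d ∈ LieModule.lowerCentralSeries ℂ L L n →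
        ⁅a + b, c + d⁆ ∈ M := by
      intro a b c d ha hc hb hd
      rw [add_lie, lie_add, lie_add]
      refine M.add_mem (M.add_mem (M.lie_mem ha hc) (hstep a d hd)) (M.add_mem ?_ (hstep b d hd))
      have : ⁅b, c⁆ = -⁅c, b⁆ := by rw [← lie_skew]
      rw [this]
      exact M.neg_mem (hstep c b hb)
    -- the subalgebra M ⊔ C^n as a raw submodule sup
    set P : Submodule ℂ L := M.toSubmodule ⊔ (LieModule.lowerCentralSeries ℂ L L n).toSubmodule with hP
    have hmemP : ∀ x, x ∈ P → ∃ a b, a ∈ M ∧ b ∈ LieModule.lowerCentralSeries ℂ L L n ∧ x = a + b := by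
      intro x hx
      rcases Submodule.mem_sup.mp hx with ⟨a, ha, b, hb, rfl⟩
      exact ⟨a, b, ha, hb, rfl⟩
    have hPlie : ∀ x ∈ P, ∀ y ∈ P, ⁅x, y⁆ ∈ M := by
      intro x hx y hy
      obtain ⟨a, b, ha, hb, rfl⟩ := hmemP x hx
      obtain ⟨c, d, hc, hd, rfl⟩ := hmemP y hy
      exact hbr a b c d ha hc hb hd
    let N : LieSubalgebra ℂ L :=
      { P with
        lie_mem' := fun {x y} hx hy => Submodule.mem_sup_left (hPlie x hx y hy) }
    have hMN : M ≤ N := fun z hz => Submodule.mem_sup_left hz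
    by_cases hN : N = ⊤
    · intro x y
      have hx : x ∈ P := by have := hN ▸ (LieSubalgebra.mem_top x); exact this
      have hy : y ∈ P := by have := hN ▸ (LieSubalgebra.mem_top y); exact this
      exact hPlie x hx y hy
    · have : N = M := by
        by_contra hne
        exact hN (hmax N (lt_of_le_of_ne hMN (fun h' => hne h'.symm)))
      apply ih
      intro z hz
      have : z ∈ N := Submodule.mem_sup_right hz
      rwa [‹N = M›] at this

/-- A complex Banach Lie algebra in which the maximal proper closed Lie subalgebras of
finite codimension intersect to {0} is nilpotent iff it is abelian. -/
theorem stmt_14 {L : Type*} [LieRing L] [LieAlgebra ℂ L] [MetricSpace L] [CompleteSpace L]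
    (hdist : ∀ x y z : L, dist (x + z) (y + z) = dist x y)
    (hnorm : ∀ (c : ℂ) (x : L), dist (c • x) 0 = ‖c‖ * dist x 0)
    (hbracket : Continuous fun p : L × L => ⁅p.1, p.2⁆)
    (hfree : sInf {M : LieSubalgebra ℂ L | M ≠ ⊤ ∧ IsClosed (M : Set L) ∧
      FiniteDimensional ℂ (L ⧸ M.toSubmodule) ∧
      ∀ N : LieSubalgebra ℂ L, M < N → N = ⊤} = ⊥) :
    LieRing.IsNilpotent L ↔ IsLieAbelian L := by
  constructor
  · intro hnil
    obtain ⟨k, hk⟩ := (LieModule.isNilpotent_iff ℂ L L).mp hnil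
    constructor
    intro x y
    have hmem : ⁅x, y⁆ ∈ sInf {M : LieSubalgebra ℂ L | M ≠ ⊤ ∧ IsClosed (M : Set L) ∧
        FiniteDimensional ℂ (L ⧸ M.toSubmodule) ∧
        ∀ N : LieSubalgebra ℂ L, M < N → N = ⊤} := by
      have : (⁅x, y⁆ : L) ∈ (↑(sInf {M : LieSubalgebra ℂ L | M ≠ ⊤ ∧ IsClosed (M : Set L) ∧
          FiniteDimensional ℂ (L ⧸ M.toSubmodule) ∧
          ∀ N : LieSubalgebra ℂ L, M < N → N = ⊤}) : Set L) := by
        rw [LieSubalgebra.coe_sInf]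
        simp only [Set.mem_iInter]
        intro M hM
        obtain ⟨hne, _, _, hmax⟩ := hM
        exact aux_lie_mem M hne hmax k (fun z hz => by rw [hk] at hz; simp at hz; simp [hz]) x y
      exact this
    rw [hfree] at hmem
    simpa using hmem
  · intro hab
    exact (LieModule.isNilpotent_iff ℂ L L).mpr ⟨1, by ext z; simp [LieModule.lowerCentralSeries_succ,
      LieSubmodule.mem_bot, trivial_lie_zero]⟩
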